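/- Necessary condition for pseudoprimality: let n ≥ 5 and let a be coprime to F_n = 2^(2^n) + 1. If F_n is composite and a^(F_n - 1) ≡ 1 (mod F_n), then a^((F_n - 1)/4) ≡ 1 (mod F_n). -/

import Mathlib

theorem stmt7 (n : ℕ) (hn : 5 ≤ n) (a : ℕ) (ha : Nat.Coprime a (2 ^ 2 ^ n + 1))
    (hcomp : ¬ Nat.Prime (2 ^ 2 ^ n + 1))
    (hpsp : a ^ (2 ^ 2 ^ n + 1 - 1) ≡ 1 [MOD 2 ^ 2 ^ n + 1]) :
    a ^ ((2 ^ 2 ^ n + 1 - 1) / 4) ≡ 1 [MOD 2 ^ 2 ^ n + 1] := by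
  set N := 2 ^ 2 ^ n + 1 with hN
  have h2n : 4 ≤ 2 ^ n := by
    calc 4 = 2 ^ 2 := rfl
    _ ≤ 2 ^ n := Nat.pow_le_pow_right (by norm_num) (by omega)
  -- (N - 1)/4 = 2^(2^n - 2)
  have hM : (N - 1) / 4 = 2 ^ (2 ^ n - 2) := by
    have : N - 1 = 2 ^ (2 ^ n - 2) * 4 := by
      have : 2 ^ 2 ^ n = 2 ^ (2 ^ n - 2) * 2 ^ 2 := by
        rw [← pow_add]; congr 1; omega
      simp [hN, this]
    omega
  set M := 2 ^ (2 ^ n - 2) with hMdef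
  have hNsub : N - 1 = 2 ^ 2 ^ n := by simp [hN]
  have hNpos : 1 < N := by
    have : 0 < 2 ^ 2 ^ n := Nat.pow_pos (by norm_num)
    omega
  have hapos : 0 < a := by
    rcases Nat.eq_zero_or_pos a with h | h
    · subst h; simp [Nat.Coprime, Nat.gcd_comm] at ha; omega
    · exact h
  -- 3 does not divide N
  have h3 : ¬ (3 ∣ N) := by
    have : 2 ^ 2 ^ n % 3 = 1 := by
      have : 2 ^ 2 ^ n = 4 ^ (2 ^ (n-1)) := by
        rw [show (4:ℕ) = 2^2 from rfl, ← pow_mul]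
        congr 1
        rw [← pow_succ']
        congr 1; omega
      rw [this, Nat.pow_mod]
      norm_num
    omega
  -- N is odd
  have hodd : ¬ (2 ∣ N) := by
    have : (2:ℕ) ∣ 2 ^ 2 ^ n := dvd_pow_self 2 (Nat.pow_pos (by norm_num : 0 < 2) : 0 < 2 ^ n).ne'
    omega
  rw [hM]
  rw [Nat.ModEq.comm, Nat.modEq_iff_dvd' (Nat.one_le_pow _ _ hapos)]
  rw [Nat.dvd_iff_prime_pow_dvd_dvd]
  intro p k hp hpk
  rcases Nat.eq_zero_or_pos k with rfl | hk
  · simp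
  have hpprime : p.Prime := hp
  have hpN : p ∣ N := dvd_trans (dvd_pow_self p hk.ne') hpk
  -- p is odd
  have hp2 : p ≠ 2 := by rintro rfl; exact hodd hpN
  have hp3 : p ≠ 3 := by rintro rfl; exact h3 hpN
  -- the cofactor c = N / p is ≥ 5
  have hpbound : p < M := by
    obtain ⟨c, hc⟩ := hpN
    have hc1 : c ≠ 1 := by rintro rfl; rw [mul_one] at hc; exact hcomp (hc ▸ hpprime)
    have hc0 : c ≠ 0 := by rintro rfl; simp [hc] at hNpos
    have hcodd : ¬ (2 ∣ c) := fun h => hodd (hc ▸ Dvd.dvd.mul_left h p)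
    have hc3 : c ≠ 3 := by rintro rfl; exact h3 (hc ▸ ⟨p, by ring⟩)
    have hc5 : 5 ≤ c := by omega
    have : 5 * p ≤ N := by
      calc 5 * p ≤ c * p := Nat.mul_le_mul_right _ hc5
      _ = N := by rw [hc]; ring
    have hlt : N < 5 * M := by
      have h1 : N = M * 4 + 1 := by
        rw [hMdef, hN, show (4:ℕ) = 2 ^ 2 from rfl, ← pow_add]
        congr 2; omega
      have hM2 : 2 ≤ M := by
        rw [hMdef]
        calc 2 = 2 ^ 1 := rfl
        _ ≤ 2 ^ (2 ^ n - 2) := Nat.pow_le_pow_right (by norm_num) (by omega)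
      rw [h1]; linarith
    have h5 : 5 * p < 5 * M := lt_of_le_of_lt this hlt
    exact lt_of_mul_lt_mul_left h5 (by norm_num)
  -- order argument mod p^k
  haveI : NeZero (p ^ k) := ⟨pow_ne_zero _ hpprime.pos.ne'⟩
  haveI : Fact p.Prime := ⟨hpprime⟩
  have hcop : Nat.Coprime a (p ^ k) := Nat.Coprime.coprime_dvd_right hpk ha
  set u : (ZMod (p ^ k))ˣ := ZMod.unitOfCoprime a hcop with hu
  have hval : (u : ZMod (p ^ k)) = (a : ZMod (p ^ k)) := rfl
  have hmodpk : a ^ 2 ^ 2 ^ n ≡ 1 [MOD p ^ k] := by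
    have := hpsp
    rw [hNsub] at this
    exact this.of_dvd hpk
  have hupow : u ^ 2 ^ 2 ^ n = 1 := by
    ext
    push_cast [hval]
    have := (ZMod.natCast_eq_natCast_iff _ _ _).mpr hmodpk
    push_cast at this
    exact this
  have hord : orderOf u ∣ 2 ^ 2 ^ n := orderOf_dvd_of_pow_eq_one hupow
  obtain ⟨j, hj, hjord⟩ := (Nat.dvd_prime_pow Nat.prime_two).mp hord
  have hcard : orderOf u ∣ p ^ (k - 1) * (p - 1) := by
    have := orderOf_dvd_card (x := u)
    rwa [ZMod.card_units_eq_totient, Nat.totient_prime_pow hpprime hk] at this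
  have hcop2 : Nat.Coprime (2 ^ j) (p ^ (k - 1)) :=
    Nat.Coprime.pow _ _ ((Nat.coprime_primes Nat.prime_two hpprime).mpr (Ne.symm hp2))
  have hdvdp1 : 2 ^ j ∣ p - 1 := hcop2.dvd_of_dvd_mul_left (hjord ▸ hcard)
  have hple : 2 ^ j ≤ p - 1 := Nat.le_of_dvd (by have := hpprime.two_le; omega) hdvdp1
  have hjle : j ≤ 2 ^ n - 2 := by
    by_contra h
    have : M < 2 ^ j := by
      apply Nat.pow_lt_pow_right (by norm_num); omega
    omega
  have hordM : orderOf u ∣ M := by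
    rw [hjord, hMdef]
    exact pow_dvd_pow 2 hjle
  have huM : u ^ M = 1 := orderOf_dvd_iff_pow_eq_one.mp hordM
  have : a ^ M ≡ 1 [MOD p ^ k] := by
    have : ((a : ZMod (p ^ k))) ^ M = 1 := by
      have := huM
      rw [Units.ext_iff] at this
      push_cast [hval] at this
      exact this
    rw [Nat.ModEq]
    have := (ZMod.natCast_eq_natCast_iff (a ^ M) 1 (p ^ k)).mp (by push_cast; simpa using this)
    simpa [Nat.ModEq] using this
  exact (Nat.modEq_iff_dvd' (Nat.one_le_pow _ _ hapos)).mp this.symm
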